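/- If V_T(σ) is nonempty, it is bounded: the set of intercept vectors (i_b) ∈ R^{B_int} defining homology tilings of a fixed convex polygon R in which every tile has positive area (with fixed orientations) is a bounded subset of R^{B_int}, because the tile areas are quadratic in the intercepts and sum to the fixed area of R. -/

import Mathlib

open Filter Topology


lemma quad_coeff_nonneg' {a b c : ℝ} (h : ∀ t : ℝ, 0 ≤ t → 0 < a * t^2 + b * t + c) :
    0 ≤ a := by
  by_contra ha
  push_neg at ha
  have hna : 0 < -a := by linarith
  have key : ∀ T : ℝ, 1 ≤ T → |b| + |c| + 1 ≤ (-a) * T → ¬ (0 < a * T^2 + b * T + c) := by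
    intro T h1 h2 hcon
    have hab : a * T + b ≤ -|c| - 1 := by nlinarith [le_abs_self b]
    have h4 : T * (a * T + b) ≤ 1 * (a * T + b) :=
      mul_le_mul_of_nonpos_right h1 (by nlinarith [abs_nonneg c])
    have h5 : a * T^2 + b * T + c = T * (a * T + b) + c := by ring
    nlinarith [le_abs_self c]
  have hX : 0 < (|b| + |c| + 1) / (-a) := div_pos (by positivity) hna
  refine key ((|b| + |c| + 1) / (-a) + 1) (by linarith) ?_ (h _ (by linarith))
  rw [mul_add, mul_one, mul_div_cancel₀ _ hna.ne']
  linarith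

lemma lin_coeff_nonneg' {b c : ℝ} (h : ∀ t : ℝ, 0 ≤ t → 0 < b * t + c) : 0 ≤ b := by
  by_contra hb
  push_neg at hb
  have hc : 0 < c := by simpa using h 0 le_rfl
  have h2 := h (c / (-b)) (div_pos hc (by linarith)).le
  have hbne : b ≠ 0 := hb.ne
  have h3 : b * (c / (-b)) = -c := by
    field_simp
  linarith [h3 ▸ h2]



lemma exists_recession' {E : Type*} [NormedAddCommGroup E] [NormedSpace ℝ E]
    [FiniteDimensional ℝ E] {C : Set E} (hCopen : IsOpen C) (hCconv : Convex ℝ C)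
    {x₀ : E} (hx₀ : x₀ ∈ C) (hub : ¬ Bornology.IsBounded C) :
    ∃ v : E, v ≠ 0 ∧ ∀ x ∈ C, ∀ t : ℝ, 0 ≤ t → x + t • v ∈ C := by
  have hxs : ∀ n : ℕ, ∃ x ∈ C, (n : ℝ) < ‖x - x₀‖ := by
    intro n
    by_contra hcon
    push_neg at hcon
    exact hub ((Metric.isBounded_closedBall (x := x₀) (r := n)).subset
      (fun x hx => by simpa [Metric.mem_closedBall, dist_eq_norm] using hcon x hx))
  choose xs hxsC hxsn using hxs
  have hpos : ∀ n, 0 < ‖xs n - x₀‖ := fun n =>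
    lt_of_le_of_lt (Nat.cast_nonneg n) (hxsn n)
  set u : ℕ → E := fun n => ‖xs n - x₀‖⁻¹ • (xs n - x₀) with hu
  have husph : ∀ n, u n ∈ Metric.sphere (0 : E) 1 := by
    intro n
    simp only [mem_sphere_zero_iff_norm, hu, norm_smul, norm_inv, norm_norm]
    exact inv_mul_cancel₀ (hpos n).ne'
  obtain ⟨v, hvsph, φ, hφ, hconv⟩ := (isCompact_sphere (0 : E) 1).tendsto_subseq husph
  have hv1 : ‖v‖ = 1 := by simpa using hvsph
  have hv0 : v ≠ 0 := by
    intro hcon; rw [hcon, norm_zero] at hv1; norm_num at hv1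
  refine ⟨v, hv0, ?_⟩
  -- step 1: ray from x₀ stays in the closure
  have hclos : ∀ t : ℝ, 0 ≤ t → x₀ + t • v ∈ closure C := by
    intro t ht
    have htend : Tendsto (fun n => x₀ + t • u (φ n)) atTop (𝓝 (x₀ + t • v)) :=
      tendsto_const_nhds.add (hconv.const_smul t)
    refine mem_closure_of_tendsto htend ?_
    filter_upwards [eventually_ge_atTop ⌈t⌉₊] with n hn
    have hle : t ≤ ‖xs (φ n) - x₀‖ := by
      have h1 : (⌈t⌉₊ : ℝ) ≤ (φ n : ℝ) := by
        exact_mod_cast le_trans hn (hφ.le_apply)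
      have h2 := Nat.le_ceil t
      linarith [hxsn (φ n)]
    set s := t / ‖xs (φ n) - x₀‖ with hs
    have hs0 : 0 ≤ s := div_nonneg ht (hpos _).le
    have hs1 : s ≤ 1 := div_le_one_of_le₀ hle (hpos _).le
    have hcomb := hCconv hx₀ (hxsC (φ n)) (by linarith : (0:ℝ) ≤ 1 - s) hs0 (by ring)
    have heq : (1 - s) • x₀ + s • xs (φ n) = x₀ + t • u (φ n) := by
      simp only [hu, smul_smul, hs, div_eq_mul_inv]
      module
    rwa [heq] at hcomb
  -- step 2: from any point of C
  intro x hx t ht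
  rcases eq_or_lt_of_le ht with h0 | htpos
  · simpa [← h0] using hx
  obtain ⟨r, hr0, hball⟩ := Metric.isOpen_iff.mp hCopen x hx
  set R := ‖x - x₀‖ with hR
  have hR0 : 0 ≤ R := norm_nonneg _
  set l := min (1/2 : ℝ) (r / (2 * (R + 1))) with hl
  have hl0 : 0 < l := lt_min (by norm_num) (by positivity)
  have hl12 : l ≤ 1/2 := min_le_left _ _
  have hlr : l ≤ r / (2 * (R + 1)) := min_le_right _ _
  have h1l : (0:ℝ) < 1 - l := by linarith
  have hlne : l ≠ 0 := hl0.ne'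
  have h1lne : (1:ℝ) - l ≠ 0 := h1l.ne'
  set y := (1 - l)⁻¹ • (x - l • x₀) with hy
  have hyx : y - x = (l / (1 - l)) • (x - x₀) := by
    rw [hy]
    match_scalars <;> field_simp <;> ring
  have hdle : l / (1 - l) ≤ 2 * l := by
    rw [div_le_iff₀ h1l]; nlinarith
  have hyC : y ∈ C := by
    apply hball
    rw [Metric.mem_ball, dist_eq_norm, hyx, norm_smul, Real.norm_eq_abs,
      abs_of_nonneg (by positivity : (0:ℝ) ≤ l / (1 - l))]
    have h2 : l * (2 * (R + 1)) ≤ r := by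
      rw [← le_div_iff₀ (by positivity)]; exact hlr
    calc l / (1 - l) * R ≤ 2 * l * R := by nlinarith
      _ < r := by nlinarith
  have hcl : x₀ + (t / l) • v ∈ closure C := hclos _ (by positivity)
  have hyint : y ∈ interior C := by rwa [hCopen.interior_eq]
  have hres := hCconv.combo_interior_closure_mem_interior hyint hcl h1l hl0.le
    (by ring : (1 - l) + l = 1)
  rw [hCopen.interior_eq] at hres
  have heq2 : (1 - l) • y + l • (x₀ + (t / l) • v) = x + t • v := by
    rw [hy]
    match_scalars <;> field_simp <;> ring
  rwa [heq2] at hres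

/-- The region `V_T(σ)` of homology tilings with positive tile areas and
fixed orientations is bounded if nonempty. Abstract formulation: let
`q_1, …, q_k : ℝ^m → ℝ` be quadratic polynomials (each a quadratic form plus a linear
form plus a constant) whose sum is identically constant, and let `C ⊆ ℝ^m` be a nonempty
open convex set on which every `q_i` is positive. Assume the nondegeneracy condition
that there is no nonzero direction `v` leaving every `q_i` translation-invariant. Then
`C` is bounded. -/
theorem positivity_region_bounded
    {m k : ℕ}
    (Qf : Fin k → QuadraticMap ℝ (Fin m → ℝ) ℝ)
    (L : Fin k → (Fin m → ℝ) →ₗ[ℝ] ℝ)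
    (c : Fin k → ℝ)
    (q : Fin k → (Fin m → ℝ) → ℝ)
    (hq : ∀ i x, q i x = Qf i x + L i x + c i)
    (S : ℝ) (hsum : ∀ x, ∑ i, q i x = S)
    (C : Set (Fin m → ℝ)) (hCopen : IsOpen C) (hCconv : Convex ℝ C)
    (hCne : C.Nonempty)
    (hpos : ∀ i, ∀ x ∈ C, 0 < q i x)
    -- nondegeneracy: no nonzero direction leaves all the `q_i` invariant:
    (hnondeg : ∀ v : Fin m → ℝ, v ≠ 0 → ∃ i, ¬ ∀ x, q i (x + v) = q i x) :
    Bornology.IsBounded C := by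
  by_contra hub
  obtain ⟨x₀, hx₀⟩ := hCne
  obtain ⟨v, hv0, hray⟩ := exists_recession' hCopen hCconv hx₀ hub
  have hexp : ∀ i x (t : ℝ), q i (x + t • v)
      = (Qf i v) * t^2 + (QuadraticMap.polar (⇑(Qf i)) x v + L i v) * t + q i x := by
    intro i x t
    rw [hq, hq]
    have h1 : (Qf i) (x + t • v)
        = Qf i x + Qf i (t • v) + QuadraticMap.polar (⇑(Qf i)) x (t • v) := by
      simp [QuadraticMap.polar]
    rw [h1, QuadraticMap.map_smul, QuadraticMap.polar_smul_right, map_add, map_smul]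
    simp only [smul_eq_mul]; ring
  have hsumA : ∀ x, (∑ i, Qf i v) = 0 ∧
      (∑ i, (QuadraticMap.polar (⇑(Qf i)) x v + L i v)) = 0 := by
    intro x
    have h1 : ∀ t : ℝ, (∑ i, Qf i v) * t^2
        + (∑ i, (QuadraticMap.polar (⇑(Qf i)) x v + L i v)) * t = 0 := by
      intro t
      have e1 := hsum (x + t • v)
      have e2 := hsum x
      simp only [hexp] at e1
      rw [Finset.sum_add_distrib, Finset.sum_add_distrib, ← Finset.sum_mul, ← Finset.sum_mul,
        e2] at e1
      linarith
    have ha := h1 1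
    have hb := h1 (-1)
    constructor <;> nlinarith [ha, hb]
  have hApos : ∀ i, 0 ≤ Qf i v := by
    intro i
    refine quad_coeff_nonneg' (b := QuadraticMap.polar (⇑(Qf i)) x₀ v + L i v) (c := q i x₀) (fun t ht => ?_)
    have := hpos i _ (hray x₀ hx₀ t ht)
    rwa [hexp] at this
  have hA0 : ∀ i, Qf i v = 0 := by
    intro i
    exact (Finset.sum_eq_zero_iff_of_nonneg (fun j _ => hApos j)).mp (hsumA x₀).1 i
      (Finset.mem_univ i)
  have hB0 : ∀ i, ∀ x ∈ C, QuadraticMap.polar (⇑(Qf i)) x v + L i v = 0 := by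
    intro i x hx
    have hBpos : ∀ j : Fin k, 0 ≤ QuadraticMap.polar (⇑(Qf j)) x v + L j v := by
      intro j
      refine lin_coeff_nonneg' (c := q j x) (fun t ht => ?_)
      have h2 := hpos j _ (hray x hx t ht)
      rw [hexp, hA0 j] at h2
      nlinarith [h2]
    exact (Finset.sum_eq_zero_iff_of_nonneg (fun j _ => hBpos j)).mp (hsumA x).2 i
      (Finset.mem_univ i)
  -- from openness: polar (·, v) vanishes identically and L i v = 0
  obtain ⟨r, hr0, hball⟩ := Metric.isOpen_iff.mp hCopen x₀ hx₀
  have hpolar : ∀ i u, QuadraticMap.polar (⇑(Qf i)) u v = 0 := by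
    intro i u
    set ε := r / (2 * (‖u‖ + 1)) with hε
    have hε0 : 0 < ε := by positivity
    have hmem : x₀ + ε • u ∈ C := by
      apply hball
      rw [Metric.mem_ball, dist_eq_norm, add_sub_cancel_left, norm_smul, Real.norm_eq_abs,
        abs_of_pos hε0]
      have h2 : ε * (2 * (‖u‖ + 1)) = r := by
        rw [hε]; field_simp
      nlinarith [norm_nonneg u]
    have h1 := hB0 i _ hmem
    have h2 := hB0 i x₀ hx₀
    rw [QuadraticMap.polar_add_left, QuadraticMap.polar_smul_left, smul_eq_mul] at h1
    have h3 : ε * QuadraticMap.polar (⇑(Qf i)) u v = 0 := by linarith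
    exact (mul_eq_zero.mp h3).resolve_left hε0.ne'
  have hLv : ∀ i, L i v = 0 := by
    intro i
    have h2 := hB0 i x₀ hx₀
    rw [hpolar i x₀] at h2
    linarith
  obtain ⟨i, hi⟩ := hnondeg v hv0
  apply hi
  intro x
  have h := hexp i x 1
  rw [one_smul, hA0 i, hpolar i x, hLv i] at h
  rw [h]; ring
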